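/- Comparison theorem (converse direction): with P, Q stochastic matrices sharing stationary law π and κ > 0, if there exists φ : V → ℝ with E_P(φ,φ) < κ E_Q(φ,φ), then there exists f : Ω → ℝ with E_{ZRP(P,r,m)}(f,f) < κ E_{ZRP(Q,r,m)}(f,f). Hence inf over non-constant f of E_{ZRP(P,r,m)}(f,f)/E_{ZRP(Q,r,m)}(f,f) equals inf over non-constant φ of E_P(φ,φ)/E_Q(φ,φ). -/

import Mathlib

open Finset

variable (V : Type*) [Fintype V] [DecidableEq V]

/-- Product-form (unnormalized) stationary weight of a configuration. -/
noncomputable def weight (π : V → ℝ) (r : V → ℕ → ℝ) (η : V → ℕ) : ℝ :=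
  ∏ x, ∏ k ∈ Finset.Icc 1 (η x), π x / r x k

/-- Add one particle at site `x` : the configuration `η + δ_x`. -/
def addOne (η : V → ℕ) (x : V) : V → ℕ := Function.update η x (η x + 1)

/-- Move a particle from `x` to `y`: the configuration `η + δ_y - δ_x`. -/
def move (η : V → ℕ) (x y : V) : V → ℕ :=
  addOne V (Function.update η x (η x - 1)) y

/-- The set of configurations of `m` particles on `V`. -/
def configs (m : ℕ) : Finset (V → ℕ) :=
  (Fintype.piFinset fun _ : V => Finset.range (m + 1)).filter fun η => ∑ x, η x = m

/-- Single-particle Dirichlet form `⟨φ, (I - P) ψ⟩_π`. -/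
noncomputable def EP (π : V → ℝ) (P : V → V → ℝ) (φ ψ : V → ℝ) : ℝ :=
  ∑ x, ∑ y, π x * P x y * (φ x * (ψ x - ψ y))

/-- Zero-range Dirichlet form with jump matrix `P`, rates `r` and measure `μ`
on configurations with `m` particles. -/
noncomputable def EZRP (P : V → V → ℝ) (r : V → ℕ → ℝ) (μ : (V → ℕ) → ℝ) (m : ℕ)
    (f g : (V → ℕ) → ℝ) : ℝ :=
  ∑ η ∈ configs V m, ∑ x, ∑ y,
    μ η * r x (η x) * P x y * (f η * (g η - g (move V η x y)))

/-- Mean of an observable on `m`-particle configurations under `μ`. -/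
noncomputable def meanOn (m : ℕ) (μ : (V → ℕ) → ℝ) (f : (V → ℕ) → ℝ) : ℝ :=
  ∑ η ∈ configs V m, μ η * f η

/-- Variance of an observable on `m`-particle configurations under `μ`. -/
noncomputable def varOn (m : ℕ) (μ : (V → ℕ) → ℝ) (f : (V → ℕ) → ℝ) : ℝ :=
  meanOn V m μ (fun η => (f η) ^ 2) - (meanOn V m μ f) ^ 2

/-- Variance of `φ : V → ℝ` under the probability vector `π`. -/
noncomputable def varPi (π : V → ℝ) (φ : V → ℝ) : ℝ :=
  ∑ x, π x * (φ x) ^ 2 - (∑ x, π x * φ x) ^ 2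

set_option linter.unusedSectionVars false

-- L0
lemma mem_configs {m : ℕ} {η : V → ℕ} : η ∈ configs V m ↔ ∑ x, η x = m := by
  constructor
  · intro h; exact (Finset.mem_filter.mp h).2
  · intro h
    refine Finset.mem_filter.mpr ⟨?_, h⟩
    refine Fintype.mem_piFinset.mpr fun x => ?_
    refine Finset.mem_range.mpr (Nat.lt_succ_of_le ?_)
    calc η x ≤ ∑ z, η z := Finset.single_le_sum (fun z _ => Nat.zero_le _) (Finset.mem_univ x)
    _ = m := h

-- L1
lemma weight_pos {π : V → ℝ} {r : V → ℕ → ℝ} (hπ : ∀ x, 0 < π x)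
    (hr : ∀ x k, 1 ≤ k → 0 < r x k) (η : V → ℕ) : 0 < weight V π r η := by
  refine Finset.prod_pos fun x _ => Finset.prod_pos fun k hk => ?_
  exact div_pos (hπ x) (hr x k (Finset.mem_Icc.mp hk).1)

-- L2
lemma weight_addOne (π : V → ℝ) (r : V → ℕ → ℝ) (ζ : V → ℕ) (x : V) :
    weight V π r (addOne V ζ x) = (π x / r x (ζ x + 1)) * weight V π r ζ := by
  unfold weight addOne
  rw [Fintype.prod_eq_mul_prod_compl x, Fintype.prod_eq_mul_prod_compl x (fun z => ∏ k ∈ Finset.Icc 1 (ζ z), π z / r z k)]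
  rw [Function.update_self]
  have h1 : ∏ k ∈ Finset.Icc 1 (ζ x + 1), π x / r x k
      = (∏ k ∈ Finset.Icc 1 (ζ x), π x / r x k) * (π x / r x (ζ x + 1)) := by
    rw [Finset.prod_Icc_succ_top (Nat.one_le_iff_ne_zero.mpr (Nat.succ_ne_zero _))]
  rw [h1]
  have h2 : ∀ z ∈ ({x}ᶜ : Finset V), (∏ k ∈ Finset.Icc 1 (Function.update ζ x (ζ x + 1) z), π z / r z k)
      = ∏ k ∈ Finset.Icc 1 (ζ z), π z / r z k := by
    intro z hz
    rw [Function.update_of_ne (Finset.mem_compl.mp hz ∘ Finset.mem_singleton.mpr ∘ id) ]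
  rw [Finset.prod_congr rfl h2]
  ring


-- auxiliary: total flow of differences vanishes
lemma sum_diff_zero (π : V → ℝ) (P : V → V → ℝ) (hProw : ∀ x, ∑ y, P x y = 1)
    (hstatP : ∀ y, ∑ x, π x * P x y = π y) (φ : V → ℝ) :
    ∑ x, ∑ y, π x * P x y * (φ x - φ y) = 0 := by
  have h1 : ∑ x, ∑ y, π x * P x y * φ x = ∑ x, π x * φ x := by
    refine Finset.sum_congr rfl fun x _ => ?_
    rw [← Finset.sum_mul, ← Finset.mul_sum, hProw x]; ring
  have h2 : ∑ x, ∑ y, π x * P x y * φ y = ∑ x, π x * φ x := by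
    rw [Finset.sum_comm]
    refine Finset.sum_congr rfl fun y _ => ?_
    rw [← Finset.sum_mul, hstatP y]
  calc ∑ x, ∑ y, π x * P x y * (φ x - φ y)
      = ∑ x, ∑ y, (π x * P x y * φ x - π x * P x y * φ y) := by
        refine Finset.sum_congr rfl fun x _ => Finset.sum_congr rfl fun y _ => by ring
    _ = (∑ x, ∑ y, π x * P x y * φ x) - ∑ x, ∑ y, π x * P x y * φ y := by
        rw [← Finset.sum_sub_distrib]
        exact Finset.sum_congr rfl fun x _ => Finset.sum_sub_distrib _ _
    _ = 0 := by rw [h1, h2, sub_self]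

-- L3 : constant shift invariance
lemma EP_shift (π : V → ℝ) (P : V → V → ℝ) (hProw : ∀ x, ∑ y, P x y = 1)
    (hstatP : ∀ y, ∑ x, π x * P x y = π y) (φ : V → ℝ) (c : ℝ) :
    EP V π P (fun z => c + φ z) (fun z => c + φ z) = EP V π P φ φ := by
  unfold EP
  have key := sum_diff_zero V π P hProw hstatP φ
  have : ∑ x, ∑ y, π x * P x y * ((c + φ x) * (c + φ x - (c + φ y)))
      = (∑ x, ∑ y, π x * P x y * (φ x * (φ x - φ y)))
        + c * ∑ x, ∑ y, π x * P x y * (φ x - φ y) := by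
    rw [Finset.mul_sum, ← Finset.sum_add_distrib]
    refine Finset.sum_congr rfl fun x _ => ?_
    rw [Finset.mul_sum, ← Finset.sum_add_distrib]
    refine Finset.sum_congr rfl fun y _ => by ring
  rw [this, key, mul_zero, add_zero]

-- L4 : symmetrization
lemma EP_sym (π : V → ℝ) (P : V → V → ℝ) (hProw : ∀ x, ∑ y, P x y = 1)
    (hstatP : ∀ y, ∑ x, π x * P x y = π y) (φ : V → ℝ) :
    EP V π P φ φ = (1/2) * ∑ x, ∑ y, π x * P x y * (φ x - φ y)^2 := by
  have key := sum_diff_zero V π P hProw hstatP (fun z => (φ z)^2)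
  unfold EP
  have : ∑ x, ∑ y, π x * P x y * (φ x - φ y)^2
      = 2 * (∑ x, ∑ y, π x * P x y * (φ x * (φ x - φ y)))
        - ∑ x, ∑ y, π x * P x y * ((φ x)^2 - (φ y)^2) := by
    rw [Finset.mul_sum, ← Finset.sum_sub_distrib]
    refine Finset.sum_congr rfl fun x _ => ?_
    rw [Finset.mul_sum, ← Finset.sum_sub_distrib]
    refine Finset.sum_congr rfl fun y _ => by ring
  rw [this, key, sub_zero]; ring

-- L5
lemma EP_nonneg (π : V → ℝ) (P : V → V → ℝ) (hπ : ∀ x, 0 < π x)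
    (hP0 : ∀ x y, 0 ≤ P x y) (hProw : ∀ x, ∑ y, P x y = 1)
    (hstatP : ∀ y, ∑ x, π x * P x y = π y) (φ : V → ℝ) :
    0 ≤ EP V π P φ φ := by
  rw [EP_sym V π P hProw hstatP]
  refine mul_nonneg (by norm_num) (Finset.sum_nonneg fun x _ => Finset.sum_nonneg fun y _ => ?_)
  exact mul_nonneg (mul_nonneg (hπ x).le (hP0 x y)) (sq_nonneg _)

-- L6
lemma EP_const (π : V → ℝ) (P : V → V → ℝ) {φ : V → ℝ} (h : ∀ x y, φ x = φ y) :
    EP V π P φ φ = 0 := by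
  unfold EP
  refine Finset.sum_eq_zero fun x _ => Finset.sum_eq_zero fun y _ => ?_
  rw [h x y, sub_self, mul_zero, mul_zero]

-- entries of powers nonneg
lemma pow_entry_nonneg (Q : V → V → ℝ) (hQ0 : ∀ x y, 0 ≤ Q x y) :
    ∀ k x y, 0 ≤ (Matrix.of Q ^ k) x y := by
  intro k
  induction k with
  | zero => intro x y; by_cases h : x = y <;> simp [Matrix.one_apply, h]
  | succ n ih =>
    intro x y
    rw [pow_succ, Matrix.mul_apply]
    exact Finset.sum_nonneg fun z _ => mul_nonneg (ih x z) (hQ0 z y)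

-- L7
lemma EP_eq_zero_const (π : V → ℝ) (Q : V → V → ℝ) (hπ : ∀ x, 0 < π x)
    (hQ0 : ∀ x y, 0 ≤ Q x y) (hQrow : ∀ x, ∑ y, Q x y = 1)
    (hQirr : ∀ x y : V, ∃ k : ℕ, 0 < (Matrix.of Q ^ k) x y)
    (hstatQ : ∀ y, ∑ x, π x * Q x y = π y)
    {φ : V → ℝ} (h : EP V π Q φ φ = 0) : ∀ x y, φ x = φ y := by
  have hterm : ∀ x y, 0 < Q x y → φ x = φ y := by
    intro x y hxy
    rw [EP_sym V π Q hQrow hstatQ] at h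
    have hsum : ∑ x, ∑ y, π x * Q x y * (φ x - φ y)^2 = 0 := by linarith
    have hnn : ∀ x ∈ Finset.univ, 0 ≤ ∑ y, π x * Q x y * (φ x - φ y)^2 := by
      intro x _
      exact Finset.sum_nonneg fun y _ =>
        mul_nonneg (mul_nonneg (hπ x).le (hQ0 x y)) (sq_nonneg _)
    have h1 := (Finset.sum_eq_zero_iff_of_nonneg hnn).mp hsum x (Finset.mem_univ x)
    have hnn2 : ∀ y ∈ Finset.univ, (0:ℝ) ≤ π x * Q x y * (φ x - φ y)^2 := fun y _ =>
      mul_nonneg (mul_nonneg (hπ x).le (hQ0 x y)) (sq_nonneg _)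
    have h2 := (Finset.sum_eq_zero_iff_of_nonneg hnn2).mp h1 y (Finset.mem_univ y)
    have hpos : 0 < π x * Q x y := mul_pos (hπ x) hxy
    have : (φ x - φ y)^2 = 0 := by
      by_contra hne
      exact hne (by
        have := mul_eq_zero.mp h2
        rcases this with h' | h'
        · exact absurd h' (ne_of_gt hpos)
        · exact h')
    have := pow_eq_zero_iff (n := 2) (by norm_num) |>.mp this
    linarith
  have hpow : ∀ k x y, 0 < (Matrix.of Q ^ k) x y → φ x = φ y := by
    intro k
    induction k with
    | zero =>
      intro x y hxy
      by_cases hxy' : x = y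
      · rw [hxy']
      · simp [Matrix.one_apply, hxy'] at hxy
    | succ n ih =>
      intro x y hxy
      rw [pow_succ, Matrix.mul_apply] at hxy
      have : ∃ z ∈ Finset.univ, (0:ℝ) < (Matrix.of Q ^ n) x z * Matrix.of Q z y := by
        by_contra hc
        push_neg at hc
        have : ∑ z, (Matrix.of Q ^ n) x z * Matrix.of Q z y ≤ 0 :=
          Finset.sum_nonpos fun z _ => hc z (Finset.mem_univ z)
        linarith
      obtain ⟨z, _, hz⟩ := this
      have h1 : 0 < (Matrix.of Q ^ n) x z :=
        lt_of_le_of_ne (pow_entry_nonneg V Q hQ0 n x z)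
          (fun he => by rw [← he] at hz; simp at hz)
      have h2 : 0 < Matrix.of Q z y := by
        by_contra hc
        push_neg at hc
        nlinarith [pow_entry_nonneg V Q hQ0 n x z]
      exact (ih x z h1).trans (hterm z y h2)
  intro x y
  obtain ⟨k, hk⟩ := hQirr x y
  exact hpow k x y hk

lemma update_addOne (ζ : V → ℕ) (x : V) :
    Function.update (addOne V ζ x) x ((addOne V ζ x) x - 1) = ζ := by
  funext z
  by_cases h : z = x
  · subst h; simp [addOne]
  · simp [addOne, Function.update_of_ne h]

lemma move_addOne (ζ : V → ℕ) (x y : V) :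
    move V (addOne V ζ x) x y = addOne V ζ y := by
  unfold move; rw [update_addOne]

lemma addOne_left_inv (η : V → ℕ) (x : V) (h : 1 ≤ η x) :
    addOne V (Function.update η x (η x - 1)) x = η := by
  funext z
  by_cases hz : z = x
  · subst hz; simp [addOne]; omega
  · simp [addOne, Function.update_of_ne hz]

lemma sum_addOne (ζ : V → ℕ) (x : V) : ∑ z, addOne V ζ x z = (∑ z, ζ z) + 1 := by
  unfold addOne
  rw [Finset.sum_update_of_mem (Finset.mem_univ x),
      Finset.sum_eq_sum_sdiff_singleton_add (Finset.mem_univ x) ζ]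
  omega

lemma sum_update_sub (η : V → ℕ) (x : V) (h : 1 ≤ η x) :
    ∑ z, Function.update η x (η x - 1) z = (∑ z, η z) - 1 := by
  rw [Finset.sum_update_of_mem (Finset.mem_univ x),
      Finset.sum_eq_sum_sdiff_singleton_add (Finset.mem_univ x) η]
  omega

lemma addOne_apply_self (ζ : V → ℕ) (x : V) : addOne V ζ x x = ζ x + 1 := by
  simp [addOne]

-- L8 : key decomposition of the ZRP Dirichlet form
lemma EZRP_decomp (π : V → ℝ) (P : V → V → ℝ) (r : V → ℕ → ℝ)
    (hr : ∀ x k, 1 ≤ k → 0 < r x k) (hr0 : ∀ x, r x 0 = 0)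
    (Z : ℝ) (μ : (V → ℕ) → ℝ) (hμ : ∀ η, μ η = weight V π r η / Z)
    (m : ℕ) (hm : 1 ≤ m) (f : (V → ℕ) → ℝ) :
    EZRP V P r μ m f f = ∑ ζ ∈ configs V (m-1),
      (weight V π r ζ / Z) * EP V π P (fun x => f (addOne V ζ x)) (fun x => f (addOne V ζ x)) := by
  unfold EZRP
  rw [Finset.sum_comm]
  have hx : ∀ x, ∑ η ∈ configs V m, ∑ y,
      μ η * r x (η x) * P x y * (f η * (f η - f (move V η x y)))
      = ∑ ζ ∈ configs V (m-1), ∑ y,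
        π x * (weight V π r ζ / Z) * P x y
          * (f (addOne V ζ x) * (f (addOne V ζ x) - f (addOne V ζ y))) := by
    intro x
    rw [← Finset.sum_filter_add_sum_filter_not (configs V m) (fun η => 1 ≤ η x)]
    have hzero : ∑ η ∈ (configs V m).filter (fun η => ¬ 1 ≤ η x), ∑ y,
        μ η * r x (η x) * P x y * (f η * (f η - f (move V η x y))) = 0 := by
      refine Finset.sum_eq_zero fun η hη => Finset.sum_eq_zero fun y _ => ?_
      have h0 : η x = 0 := by
        have := (Finset.mem_filter.mp hη).2
        omega
      rw [h0, hr0, mul_zero, zero_mul, zero_mul]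
    rw [hzero, add_zero]
    refine Finset.sum_nbij' (i := fun η => Function.update η x (η x - 1))
      (j := fun ζ => addOne V ζ x) ?_ ?_ ?_ ?_ ?_
    · intro η hη
      obtain ⟨hη1, hη2⟩ := Finset.mem_filter.mp hη
      have hsum := (mem_configs V).mp hη1
      refine (mem_configs V).mpr ?_
      rw [sum_update_sub V η x hη2, hsum]
    · intro ζ hζ
      have hsum := (mem_configs V).mp hζ
      refine Finset.mem_filter.mpr ⟨(mem_configs V).mpr ?_, ?_⟩
      · rw [sum_addOne, hsum]; omega
      · simp [addOne]
    · intro η hη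
      exact addOne_left_inv V η x (Finset.mem_filter.mp hη).2
    · intro ζ _
      exact update_addOne V ζ x
    · intro η hη
      obtain ⟨hη1, hη2⟩ := Finset.mem_filter.mp hη
      have hback : addOne V (Function.update η x (η x - 1)) x = η :=
        addOne_left_inv V η x hη2
      have hζx : Function.update η x (η x - 1) x + 1 = η x := by
        rw [Function.update_self]; omega
      have hw : weight V π r η
          = π x / r x (η x) * weight V π r (Function.update η x (η x - 1)) := by
        conv_lhs => rw [← hback]
        rw [weight_addOne, hζx]
      have hrne : r x (η x) ≠ 0 := (hr x _ hη2).ne'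
      rw [hback]
      refine Finset.sum_congr rfl fun y _ => ?_
      have hc : π x / r x (η x) * weight V π r (Function.update η x (η x - 1)) / Z
          * r x (η x) = π x * (weight V π r (Function.update η x (η x - 1)) / Z) := by
        field_simp
      rw [show move V η x y = addOne V (Function.update η x (η x - 1)) y from rfl,
        hμ, hw, hc]
  rw [Finset.sum_congr rfl (fun x _ => hx x), Finset.sum_comm]
  refine Finset.sum_congr rfl fun ζ _ => ?_
  unfold EP
  rw [Finset.mul_sum]
  refine Finset.sum_congr rfl fun x _ => ?_
  rw [Finset.mul_sum]
  exact Finset.sum_congr rfl fun y _ => by ring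

noncomputable def lift (φ : V → ℝ) (η : V → ℕ) : ℝ := ∑ w, φ w * (η w : ℝ)

lemma lift_addOne (φ : V → ℝ) (ζ : V → ℕ) (x : V) :
    lift V φ (addOne V ζ x) = φ x + lift V φ ζ := by
  unfold lift
  have h : ∀ w, φ w * ((addOne V ζ x w : ℕ) : ℝ)
      = Function.update (fun w => φ w * (ζ w : ℝ)) x (φ x * ((ζ x : ℝ) + 1)) w := by
    intro w
    by_cases hw : w = x
    · subst hw; simp [addOne]
    · simp [addOne, Function.update_of_ne hw]
  rw [Finset.sum_congr rfl fun w _ => h w,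
      Finset.sum_update_of_mem (Finset.mem_univ x),
      Finset.sum_eq_sum_sdiff_singleton_add (Finset.mem_univ x) (fun w => φ w * (ζ w : ℝ))]
  ring

lemma EZRP_lift (π : V → ℝ) (P : V → V → ℝ)
    (hProw : ∀ x, ∑ y, P x y = 1) (hstatP : ∀ y, ∑ x, π x * P x y = π y)
    (r : V → ℕ → ℝ) (hr : ∀ x k, 1 ≤ k → 0 < r x k) (hr0 : ∀ x, r x 0 = 0)
    (Z : ℝ) (μ : (V → ℕ) → ℝ) (hμ : ∀ η, μ η = weight V π r η / Z)
    (m : ℕ) (hm : 1 ≤ m) (φ : V → ℝ) :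
    EZRP V P r μ m (lift V φ) (lift V φ)
      = (∑ ζ ∈ configs V (m-1), weight V π r ζ / Z) * EP V π P φ φ := by
  rw [EZRP_decomp V π P r hr hr0 Z μ hμ m hm, Finset.sum_mul]
  refine Finset.sum_congr rfl fun ζ _ => ?_
  have h : (fun x => lift V φ (addOne V ζ x)) = (fun x => lift V φ ζ + φ x) := by
    funext x; rw [lift_addOne]; ring
  rw [h, EP_shift V π P hProw hstatP]

lemma EZRP_nonneg (π : V → ℝ) (P : V → V → ℝ) (hπ : ∀ x, 0 < π x)
    (hP0 : ∀ x y, 0 ≤ P x y) (hProw : ∀ x, ∑ y, P x y = 1)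
    (hstatP : ∀ y, ∑ x, π x * P x y = π y)
    (r : V → ℕ → ℝ) (hr : ∀ x k, 1 ≤ k → 0 < r x k) (hr0 : ∀ x, r x 0 = 0)
    (Z : ℝ) (hZ : 0 < Z) (μ : (V → ℕ) → ℝ) (hμ : ∀ η, μ η = weight V π r η / Z)
    (m : ℕ) (hm : 1 ≤ m) (f : (V → ℕ) → ℝ) :
    0 ≤ EZRP V P r μ m f f := by
  rw [EZRP_decomp V π P r hr hr0 Z μ hμ m hm]
  refine Finset.sum_nonneg fun ζ _ => mul_nonneg ?_ ?_
  · exact div_nonneg (weight_pos V hπ hr ζ).le hZ.le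
  · exact EP_nonneg V π P hπ hP0 hProw hstatP _

lemma move_apply (η : V → ℕ) (x y : V) (hxy : x ≠ y) (z : V) :
    move V η x y z = if z = y then η y + 1 else if z = x then η x - 1 else η z := by
  simp only [move, addOne, Function.update_apply]
  split_ifs with h1 h2 <;> simp_all

lemma connect (m : ℕ) (hm : 1 ≤ m) (f : (V → ℕ) → ℝ)
    (H : ∀ ζ : V → ℕ, ∑ z, ζ z = m - 1 → ∀ x y, f (addOne V ζ x) = f (addOne V ζ y)) :
    ∀ η η' : V → ℕ, (∑ z, η z = m) → (∑ z, η' z = m) → f η = f η' := by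
  suffices h : ∀ d : ℕ, ∀ η η' : V → ℕ,
      (∑ z, ((η z - η' z) + (η' z - η z)) = d) →
      (∑ z, η z = m) → (∑ z, η' z = m) → f η = f η' by
    intro η η' h1 h2
    exact h _ η η' rfl h1 h2
  intro d
  induction d using Nat.strong_induction_on with
  | _ d ih =>
    intro η η' hD h1 h2
    by_cases hEq : η = η'
    · rw [hEq]
    · have hne : ∃ x, η x ≠ η' x := by
        by_contra hc; push_neg at hc; exact hEq (funext hc)
      obtain ⟨x0, hx0⟩ := hne
      have hsums : ∑ z, η z = ∑ z, η' z := by omega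
      have hex : ∃ x, η' x < η x := by
        by_contra hc; push_neg at hc
        have : ∑ z, η z < ∑ z, η' z :=
          Finset.sum_lt_sum (fun i _ => hc i)
            ⟨x0, Finset.mem_univ _, lt_of_le_of_ne (hc x0) hx0⟩
        omega
      obtain ⟨x, hx⟩ := hex
      have hey : ∃ y, η y < η' y := by
        by_contra hc; push_neg at hc
        have : ∑ z, η' z < ∑ z, η z :=
          Finset.sum_lt_sum (fun i _ => hc i)
            ⟨x, Finset.mem_univ _, hx⟩
        omega
      obtain ⟨y, hy⟩ := hey
      have hxy : x ≠ y := by intro h; subst h; omega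
      have h1le : 1 ≤ η x := by omega
      have hζsum : ∑ z, Function.update η x (η x - 1) z = m - 1 := by
        rw [sum_update_sub V η x h1le, h1]
      have hstep : f η = f (move V η x y) := by
        have := H (Function.update η x (η x - 1)) hζsum x y
        rw [addOne_left_inv V η x h1le] at this
        exact this
      have hsum'' : ∑ z, move V η x y z = m := by
        rw [show move V η x y = addOne V (Function.update η x (η x - 1)) y from rfl,
          sum_addOne, hζsum]
        omega
      have hDlt : ∑ z, ((move V η x y z - η' z) + (η' z - move V η x y z)) < d := by
        rw [← hD]
        refine Finset.sum_lt_sum (fun z _ => ?_) ⟨x, Finset.mem_univ _, ?_⟩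
        · rw [move_apply V η x y hxy z]
          split_ifs with hz1 hz2
          · subst hz1; omega
          · subst hz2; omega
          · omega
        · rw [move_apply V η x y hxy x, if_neg hxy, if_pos rfl]
          omega
      rw [hstep]
      exact ih _ hDlt (move V η x y) η' rfl hsum'' h2

/-- comparison theorem, converse direction, and equality of the infima
of the Dirichlet-form ratios over non-constant observables. -/
theorem zrp_comparison_converse
    (m : ℕ) (hm : 1 ≤ m)
    (π : V → ℝ) (hπ : ∀ x, 0 < π x) (hπ1 : ∑ x, π x = 1)
    (P Q : V → V → ℝ)
    (hP0 : ∀ x y, 0 ≤ P x y) (hProw : ∀ x, ∑ y, P x y = 1)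
    (hQ0 : ∀ x y, 0 ≤ Q x y) (hQrow : ∀ x, ∑ y, Q x y = 1)
    (hPirr : ∀ x y : V, ∃ k : ℕ, 0 < (Matrix.of P ^ k) x y)
    (hQirr : ∀ x y : V, ∃ k : ℕ, 0 < (Matrix.of Q ^ k) x y)
    (hstatP : ∀ y, ∑ x, π x * P x y = π y)
    (hstatQ : ∀ y, ∑ x, π x * Q x y = π y)
    (r : V → ℕ → ℝ) (hr : ∀ x k, 1 ≤ k → 0 < r x k) (hr0 : ∀ x, r x 0 = 0)
    (Z : ℝ) (hZ : 0 < Z)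
    (μ : (V → ℕ) → ℝ) (hμ : ∀ η, μ η = weight V π r η / Z)
    (κ : ℝ) (hκ : 0 < κ) :
    ((∃ φ : V → ℝ, EP V π P φ φ < κ * EP V π Q φ φ) →
      ∃ f : (V → ℕ) → ℝ, EZRP V P r μ m f f < κ * EZRP V Q r μ m f f)
    ∧ sInf {t : ℝ | ∃ f : (V → ℕ) → ℝ,
          (∃ η ∈ configs V m, ∃ η' ∈ configs V m, f η ≠ f η') ∧
          t = EZRP V P r μ m f f / EZRP V Q r μ m f f}
      = sInf {t : ℝ | ∃ φ : V → ℝ, (∃ x y : V, φ x ≠ φ y) ∧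
          t = EP V π P φ φ / EP V π Q φ φ} := by

  have hVne : Nonempty V := by
    by_contra h
    rw [not_nonempty_iff] at h
    rw [Finset.univ_eq_empty, Finset.sum_empty] at hπ1
    norm_num at hπ1
  obtain ⟨v⟩ := hVne
  set W : ℝ := ∑ ζ ∈ configs V (m-1), weight V π r ζ / Z with hWdef
  have hζ0 : (fun z => if z = v then m - 1 else 0) ∈ configs V (m-1) := by
    rw [mem_configs]; simp
  have hWpos : 0 < W :=
    Finset.sum_pos (fun ζ _ => div_pos (weight_pos V hπ hr ζ) hZ) ⟨_, hζ0⟩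
  have keyP : ∀ φ : V → ℝ, EZRP V P r μ m (lift V φ) (lift V φ) = W * EP V π P φ φ :=
    fun φ => EZRP_lift V π P hProw hstatP r hr hr0 Z μ hμ m hm φ
  have keyQ : ∀ φ : V → ℝ, EZRP V Q r μ m (lift V φ) (lift V φ) = W * EP V π Q φ φ :=
    fun φ => EZRP_lift V π Q hQrow hstatQ r hr hr0 Z μ hμ m hm φ
  constructor
  · rintro ⟨φ, hφ⟩
    refine ⟨lift V φ, ?_⟩
    rw [keyP, keyQ, show κ * (W * EP V π Q φ φ) = W * (κ * EP V π Q φ φ) by ring]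
    exact (mul_lt_mul_iff_right₀ hWpos).mpr hφ
  · by_cases hsub : ∀ x y : V, x = y
    · have h1 : {t : ℝ | ∃ φ : V → ℝ, (∃ x y : V, φ x ≠ φ y) ∧
          t = EP V π P φ φ / EP V π Q φ φ} = ∅ := by
        ext t; simp only [Set.mem_setOf_eq, Set.mem_empty_iff_false, iff_false]
        rintro ⟨φ, ⟨x, y, hxy⟩, -⟩
        exact hxy (by rw [hsub x y])
      have h2 : {t : ℝ | ∃ f : (V → ℕ) → ℝ,
          (∃ η ∈ configs V m, ∃ η' ∈ configs V m, f η ≠ f η') ∧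
          t = EZRP V P r μ m f f / EZRP V Q r μ m f f} = ∅ := by
        ext t; simp only [Set.mem_setOf_eq, Set.mem_empty_iff_false, iff_false]
        rintro ⟨f, ⟨η, hη, η', hη', hne⟩, -⟩
        have hsη := (mem_configs V).mp hη
        have hsη' := (mem_configs V).mp hη'
        have : η = η' := by
          funext z
          have huniv : (Finset.univ : Finset V) = {v} := by
            ext w; simp [hsub w v]
          rw [huniv, Finset.sum_singleton] at hsη hsη'
          rw [hsub z v, hsη, hsη']
        exact hne (by rw [this])
      rw [h1, h2]
    · push_neg at hsub
      obtain ⟨a, b, hab⟩ := hsub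
      set Sf := {t : ℝ | ∃ f : (V → ℕ) → ℝ,
          (∃ η ∈ configs V m, ∃ η' ∈ configs V m, f η ≠ f η') ∧
          t = EZRP V P r μ m f f / EZRP V Q r μ m f f} with hSfdef
      set Sφ := {t : ℝ | ∃ φ : V → ℝ, (∃ x y : V, φ x ≠ φ y) ∧
          t = EP V π P φ φ / EP V π Q φ φ} with hSφdef
      -- point-mass configurations
      have hpoint : ∀ x : V, (fun z => if z = x then m else 0) ∈ configs V m := by
        intro x; rw [mem_configs]; simp
      have hliftval : ∀ (φ : V → ℝ) (x : V),
          lift V φ (fun z => if z = x then m else 0) = φ x * m := by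
        intro φ x
        unfold lift
        have h : ∀ w, φ w * (((if w = x then m else 0 : ℕ)) : ℝ)
            = if w = x then φ x * (m : ℝ) else 0 := by
          intro w; split_ifs with h
          · subst h; simp
          · simp
        rw [Finset.sum_congr rfl fun w _ => h w, Finset.sum_ite_eq' Finset.univ x]
        simp
      have hmne : ((m : ℝ)) ≠ 0 := by positivity
      have hsub' : Sφ ⊆ Sf := by
        rintro t ⟨φ, ⟨x, y, hxy⟩, rfl⟩
        refine ⟨lift V φ, ⟨_, hpoint x, _, hpoint y, ?_⟩, ?_⟩
        · rw [hliftval, hliftval]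
          exact fun h => hxy (mul_right_cancel₀ hmne h)
        · rw [keyP, keyQ, mul_div_mul_left _ _ hWpos.ne']
      have hSφ_ne : Sφ.Nonempty := by
        refine ⟨_, ⟨fun z => if z = a then 1 else 0, ⟨a, b, ?_⟩, rfl⟩⟩
        simp [hab, Ne.symm hab]
      have hSf_ne : Sf.Nonempty := hSφ_ne.mono hsub'
      have hSφ_lb : ∀ t ∈ Sφ, (0:ℝ) ≤ t := by
        rintro t ⟨φ, -, rfl⟩
        exact div_nonneg (EP_nonneg V π P hπ hP0 hProw hstatP φ)
          (EP_nonneg V π Q hπ hQ0 hQrow hstatQ φ)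
      have hSf_lb : ∀ t ∈ Sf, (0:ℝ) ≤ t := by
        rintro t ⟨f, -, rfl⟩
        exact div_nonneg
          (EZRP_nonneg V π P hπ hP0 hProw hstatP r hr hr0 Z hZ μ hμ m hm f)
          (EZRP_nonneg V π Q hπ hQ0 hQrow hstatQ r hr hr0 Z hZ μ hμ m hm f)
      have h1 : sInf Sf ≤ sInf Sφ := csInf_le_csInf ⟨0, hSf_lb⟩ hSφ_ne hsub'
      have h2 : sInf Sφ ≤ sInf Sf := by
        refine le_csInf hSf_ne ?_
        rintro t ⟨f, ⟨η, hη, η', hη', hne⟩, rfl⟩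
        set s := sInf Sφ with hsdef
        have hs0 : 0 ≤ s := le_csInf hSφ_ne hSφ_lb
        -- decompose
        have hdP := EZRP_decomp V π P r hr hr0 Z μ hμ m hm f
        have hdQ := EZRP_decomp V π Q r hr hr0 Z μ hμ m hm f
        set g : (V → ℕ) → V → ℝ := fun ζ x => f (addOne V ζ x) with hgdef
        have hkey : ∀ ζ ∈ configs V (m-1), s * EP V π Q (g ζ) (g ζ) ≤ EP V π P (g ζ) (g ζ) := by
          intro ζ _
          by_cases hg : ∀ x y, g ζ x = g ζ y
          · rw [EP_const V π P hg, EP_const V π Q hg, mul_zero]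
          · push_neg at hg
            obtain ⟨x, y, hxy⟩ := hg
            have hbpos : 0 < EP V π Q (g ζ) (g ζ) := by
              rcases lt_or_eq_of_le (EP_nonneg V π Q hπ hQ0 hQrow hstatQ (g ζ)) with h | h
              · exact h
              · exact absurd (EP_eq_zero_const V π Q hπ hQ0 hQrow hQirr hstatQ h.symm x y) hxy
            have hmem : EP V π P (g ζ) (g ζ) / EP V π Q (g ζ) (g ζ) ∈ Sφ :=
              ⟨g ζ, ⟨x, y, hxy⟩, rfl⟩
            have hle : s ≤ EP V π P (g ζ) (g ζ) / EP V π Q (g ζ) (g ζ) :=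
              csInf_le ⟨0, hSφ_lb⟩ hmem
            exact (le_div_iff₀ hbpos).mp hle
        have hAB : s * EZRP V Q r μ m f f ≤ EZRP V P r μ m f f := by
          rw [hdP, hdQ, Finset.mul_sum]
          refine Finset.sum_le_sum fun ζ hζ => ?_
          have hwnn : 0 ≤ weight V π r ζ / Z := (div_pos (weight_pos V hπ hr ζ) hZ).le
          calc s * (weight V π r ζ / Z * EP V π Q (g ζ) (g ζ))
              = weight V π r ζ / Z * (s * EP V π Q (g ζ) (g ζ)) := by ring
            _ ≤ weight V π r ζ / Z * EP V π P (g ζ) (g ζ) :=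
                mul_le_mul_of_nonneg_left (hkey ζ hζ) hwnn
        rcases lt_or_eq_of_le (EZRP_nonneg V π Q hπ hQ0 hQrow hstatQ r hr hr0 Z hZ μ hμ m hm f)
          with hB | hB
        · exact (le_div_iff₀ hB).mpr hAB
        · -- EZRP Q f f = 0 : contradiction with non-constancy
          exfalso
          have hzero : ∀ ζ ∈ configs V (m-1),
              weight V π r ζ / Z * EP V π Q (g ζ) (g ζ) = 0 := by
            have hnn : ∀ ζ ∈ configs V (m-1),
                0 ≤ weight V π r ζ / Z * EP V π Q (g ζ) (g ζ) := fun ζ _ =>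
              mul_nonneg (div_pos (weight_pos V hπ hr ζ) hZ).le
                (EP_nonneg V π Q hπ hQ0 hQrow hstatQ _)
            exact (Finset.sum_eq_zero_iff_of_nonneg hnn).mp (by rw [← hdQ, ← hB])
          have hconst : ∀ ζ : V → ℕ, ∑ z, ζ z = m - 1 →
              ∀ x y, f (addOne V ζ x) = f (addOne V ζ y) := by
            intro ζ hζ x y
            have hmem := (mem_configs V (m := m-1)).mpr hζ
            have := hzero ζ hmem
            have hEP0 : EP V π Q (g ζ) (g ζ) = 0 := by
              rcases mul_eq_zero.mp this with h | h
              · exact absurd h (div_pos (weight_pos V hπ hr ζ) hZ).ne'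
              · exact h
            exact EP_eq_zero_const V π Q hπ hQ0 hQrow hQirr hstatQ hEP0 x y
          exact hne (connect V m hm f hconst η η' ((mem_configs V).mp hη) ((mem_configs V).mp hη'))
      linarith
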